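/- Let K = ℚ(t). The quotient ring K[x,y,z]/(x, 6ty^5z + 7xy^6, 5z^4 + ty^6) is a K-vector space of dimension 26; consequently the second sectional Milnor number e_2(m | J(F_t)) of F_t = z^5 + ty^6z + xy^7 + x^{15} equals 26, which differs from the value 28 at t = 0 although the Milnor number 364 is the same — disproving Teissier's conjecture. -/

import Mathlib

open MvPolynomial Finsupp

noncomputable section SM

abbrev KK : Type := RatFunc ℚ
abbrev SS : Type := MvPolynomial (Fin 3) KK

def tt : KK := RatFunc.X
def cc : KK := tt / 5

instance : CharZero KK :=
  RingHom.charZero_iff ((algebraMap ℚ KK).injective) |>.mp inferInstance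

lemma tt_ne : tt ≠ 0 := RatFunc.X_ne_zero
lemma hcc5 : (5 : KK) * cc = tt := by
  rw [cc, mul_comm, div_mul_cancel₀ _ (by norm_num : (5:KK) ≠ 0)]

def dead (a b : ℕ) : Prop := (b % 4 = 0 ∧ 11 ≤ a + 6*(b/4)) ∨ (1 ≤ b % 4 ∧ 5 ≤ a + 6*(b/4))

instance (a b : ℕ) : Decidable (dead a b) := by unfold dead; infer_instance

def E (a r : ℕ) : Fin 3 →₀ ℕ := Finsupp.single 1 a + Finsupp.single 2 r

lemma E0 (a r : ℕ) : (E a r) 0 = 0 := by simp [E, Finsupp.single_apply]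
lemma E1 (a r : ℕ) : (E a r) 1 = a := by simp [E, Finsupp.single_apply]
lemma E2 (a r : ℕ) : (E a r) 2 = r := by simp [E, Finsupp.single_apply]

def red (d : Fin 3 →₀ ℕ) : SS :=
  if d 0 ≠ 0 ∨ dead (d 1) (d 2) then 0
  else ((-cc)^(d 2 / 4)) • monomial (E (d 1 + 6*(d 2/4)) (d 2 % 4)) 1

def L : SS →ₗ[KK] SS := (basisMonomials (Fin 3) KK).constr KK red

lemma L_monomial (d : Fin 3 →₀ ℕ) (k : KK) : L (monomial d k) = k • red d := by
  have h : (monomial d k : SS) = k • monomial d 1 := by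
    rw [smul_monomial, smul_eq_mul, mul_one]
  rw [h, map_smul]
  congr 1
  have := (basisMonomials (Fin 3) KK).constr_basis KK red d
  simpa [L, coe_basisMonomials] using this

def g1 : SS := X 0
def g2 : SS := 6 * C tt * X 1 ^ 5 * X 2 + 7 * X 0 * X 1 ^ 6
def g3 : SS := 5 * X 2 ^ 4 + C tt * X 1 ^ 6

def I : Ideal SS := Ideal.span {g1, g2, g3}

lemma hg1 : g1 = monomial (Finsupp.single 0 1) 1 := rfl

lemma hg2 : g2 = monomial (Finsupp.single 1 5 + Finsupp.single 2 1) (6*tt)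
      + monomial (Finsupp.single 0 1 + Finsupp.single 1 6) 7 := by
  have h2 : (X 2 : SS) = monomial (Finsupp.single 2 1) 1 := rfl
  have h0 : (X 0 : SS) = monomial (Finsupp.single 0 1) 1 := rfl
  have c6 : (6 : SS) = C (6 : KK) := (map_ofNat (C : KK →+* SS) 6).symm
  have c7 : (7 : SS) = C (7 : KK) := (map_ofNat (C : KK →+* SS) 7).symm
  rw [g2, X_pow_eq_monomial, X_pow_eq_monomial, h2, h0, c6, c7]
  rw [← C_mul, C_mul_monomial, monomial_mul, C_mul_monomial, monomial_mul]
  simp [mul_one]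

lemma hg3 : g3 = monomial (Finsupp.single 2 4) 5 + monomial (Finsupp.single 1 6) tt := by
  have c5 : (5 : SS) = C (5 : KK) := (map_ofNat (C : KK →+* SS) 5).symm
  rw [g3, X_pow_eq_monomial, X_pow_eq_monomial, c5, C_mul_monomial, C_mul_monomial]
  rw [mul_one, mul_one]

lemma Lg1 (p : SS) : L (p * g1) = 0 := by
  induction p using MvPolynomial.induction_on' with
  | monomial d k =>
    rw [hg1, monomial_mul, L_monomial]
    have h : red (d + Finsupp.single 0 1) = 0 := by
      rw [red, if_pos]
      left
      simp [Finsupp.single_apply]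
    rw [h, smul_zero]
  | add p q hp hq => rw [add_mul, map_add, hp, hq, add_zero]

lemma Lg2 (p : SS) : L (p * g2) = 0 := by
  induction p using MvPolynomial.induction_on' with
  | monomial d k =>
    rw [hg2, mul_add, monomial_mul, monomial_mul, map_add, L_monomial, L_monomial]
    have ha : red (d + (Finsupp.single 1 5 + Finsupp.single 2 1)) = 0 := by
      rw [red, if_pos]
      right
      have e1 : (d + (Finsupp.single 1 5 + Finsupp.single 2 1) : Fin 3 →₀ ℕ) 1 = d 1 + 5 := by
        simp [Finsupp.single_apply]
      have e2 : (d + (Finsupp.single 1 5 + Finsupp.single 2 1) : Fin 3 →₀ ℕ) 2 = d 2 + 1 := by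
        simp [Finsupp.single_apply]
      rw [e1, e2]
      unfold dead; omega
    have hb : red (d + (Finsupp.single 0 1 + Finsupp.single 1 6)) = 0 := by
      rw [red, if_pos]
      left
      simp [Finsupp.single_apply]
    rw [ha, hb, smul_zero, smul_zero, add_zero]
  | add p q hp hq => rw [add_mul, map_add, hp, hq, add_zero]

lemma Lg3 (p : SS) : L (p * g3) = 0 := by
  induction p using MvPolynomial.induction_on' with
  | monomial d k =>
    rw [hg3, mul_add, monomial_mul, monomial_mul, map_add, L_monomial, L_monomial]
    have key : (5 : KK) • red (d + Finsupp.single 2 4) + tt • red (d + Finsupp.single 1 6) = 0 := by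
      have u0 : (d + Finsupp.single 2 4 : Fin 3 →₀ ℕ) 0 = d 0 := by simp [Finsupp.single_apply]
      have u1 : (d + Finsupp.single 2 4 : Fin 3 →₀ ℕ) 1 = d 1 := by simp [Finsupp.single_apply]
      have u2 : (d + Finsupp.single 2 4 : Fin 3 →₀ ℕ) 2 = d 2 + 4 := by simp [Finsupp.single_apply]
      have w0 : (d + Finsupp.single 1 6 : Fin 3 →₀ ℕ) 0 = d 0 := by simp [Finsupp.single_apply]
      have w1 : (d + Finsupp.single 1 6 : Fin 3 →₀ ℕ) 1 = d 1 + 6 := by simp [Finsupp.single_apply]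
      have w2 : (d + Finsupp.single 1 6 : Fin 3 →₀ ℕ) 2 = d 2 := by simp [Finsupp.single_apply]
      rw [red, red, u0, u1, u2, w0, w1, w2]
      rcases eq_or_ne (d 0) 0 with hi | hi
      · by_cases hd : dead (d 1 + 6) (d 2)
        · rw [if_pos (Or.inr (by unfold dead at hd ⊢; omega)), if_pos (Or.inr hd),
            smul_zero, smul_zero, add_zero]
        · rw [if_neg (by push_neg; exact ⟨hi, by unfold dead at hd ⊢; omega⟩),
            if_neg (by push_neg; exact ⟨hi, hd⟩)]
          rw [show (d 2 + 4)/4 = d 2/4 + 1 from by omega,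
            show (d 2 + 4) % 4 = d 2 % 4 from by omega,
            show d 1 + 6*(d 2/4 + 1) = d 1 + 6 + 6*(d 2/4) from by omega]
          rw [smul_smul, smul_smul, ← add_smul]
          have hz : (5:KK) * (-cc)^(d 2/4 + 1) + tt * (-cc)^(d 2/4) = 0 := by
            have h5 := hcc5
            linear_combination (-((-cc)^(d 2/4))) * h5
          rw [hz, zero_smul]
      · rw [if_pos (Or.inl (by omega)), if_pos (Or.inl (by omega)), smul_zero, smul_zero, add_zero]
    calc (k * 5) • red (d + Finsupp.single 2 4) + (k * tt) • red (d + Finsupp.single 1 6)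
        = k • ((5:KK) • red (d + Finsupp.single 2 4) + tt • red (d + Finsupp.single 1 6)) := by
          rw [smul_add, smul_smul, smul_smul]
      _ = 0 := by rw [key, smul_zero]
  | add p q hp hq => rw [add_mul, map_add, hp, hq, add_zero]

lemma mem_I_repr {q : SS} (hq : q ∈ I) :
    ∃ p1 p2 p3 : SS, q = p1 * g1 + p2 * g2 + p3 * g3 := by
  rw [I, show ({g1, g2, g3} : Set SS) = insert g1 (insert g2 {g3}) from rfl,
    Ideal.span_insert, Ideal.span_insert, Submodule.mem_sup] at hq
  obtain ⟨y1, hy1, z, hz, rfl⟩ := hq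
  rw [Submodule.mem_sup] at hz
  obtain ⟨y2, hy2, y3, hy3, rfl⟩ := hz
  rw [Ideal.mem_span_singleton'] at hy1 hy2 hy3
  obtain ⟨p1, rfl⟩ := hy1
  obtain ⟨p2, rfl⟩ := hy2
  obtain ⟨p3, rfl⟩ := hy3
  exact ⟨p1, p2, p3, by ring⟩

lemma L_vanish {q : SS} (hq : q ∈ I) : L q = 0 := by
  obtain ⟨p1, p2, p3, rfl⟩ := mem_I_repr hq
  rw [map_add, map_add, Lg1, Lg2, Lg3, add_zero, add_zero]

lemma g1_mem : g1 ∈ I := Ideal.subset_span (by simp)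
lemma g2_mem : g2 ∈ I := Ideal.subset_span (by simp)
lemma g3_mem : g3 ∈ I := Ideal.subset_span (by simp)

lemma smulK_mem {x : SS} (hx : x ∈ I) (k : KK) : k • x ∈ I := by
  rw [smul_eq_C_mul]; exact Ideal.mul_mem_left _ _ hx

lemma X0X16_mem : (monomial (Finsupp.single 0 1 + Finsupp.single 1 6) 1 : SS) ∈ I := by
  have h : (monomial (Finsupp.single 0 1 + Finsupp.single 1 6) 1 : SS)
      = monomial (Finsupp.single 1 6) 1 * g1 := by
    rw [hg1, monomial_mul, mul_one, add_comm]
  rw [h]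
  exact Ideal.mul_mem_left _ _ g1_mem

lemma six_tt_ne : (6 : KK) * tt ≠ 0 := by
  have : (6 : KK) ≠ 0 := by norm_num
  exact mul_ne_zero this tt_ne

lemma y5z_mem : (monomial (Finsupp.single 1 5 + Finsupp.single 2 1) 1 : SS) ∈ I := by
  have h : (monomial (Finsupp.single 1 5 + Finsupp.single 2 1) 1 : SS)
      = C (1/(6*tt)) * g2
        - C (7/(6*tt)) * monomial (Finsupp.single 0 1 + Finsupp.single 1 6) 1 := by
    rw [hg2, mul_add, C_mul_monomial, C_mul_monomial, C_mul_monomial]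
    rw [show (1/(6*tt)) * (6*tt) = (1:KK) from one_div_mul_cancel six_tt_ne,
      show (1/(6*tt)) * 7 = (7/(6*tt)) * (1:KK) from by ring]
    rw [add_sub_cancel_right]
  rw [h]
  exact sub_mem (Ideal.mul_mem_left _ _ g2_mem) (Ideal.mul_mem_left _ _ X0X16_mem)

lemma y11_mem : (monomial (Finsupp.single 1 11) 1 : SS) ∈ I := by
  have hexp1 : (Finsupp.single 1 5 + Finsupp.single 1 6 : Fin 3 →₀ ℕ) = Finsupp.single 1 11 := by
    rw [← Finsupp.single_add]
  have hexp2 : (Finsupp.single 1 5 + Finsupp.single 2 1 + Finsupp.single 2 3 : Fin 3 →₀ ℕ)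
      = Finsupp.single 1 5 + Finsupp.single 2 4 := by
    rw [add_assoc, ← Finsupp.single_add]
  have h : (monomial (Finsupp.single 1 11) 1 : SS)
      = C (1/tt) * (monomial (Finsupp.single 1 5) 1 * g3)
        - C (5/tt) * (monomial (Finsupp.single 1 5 + Finsupp.single 2 1) 1
            * monomial (Finsupp.single 2 3) 1) := by
    rw [hg3, mul_add, monomial_mul, monomial_mul, monomial_mul, hexp1, hexp2]
    rw [mul_add, C_mul_monomial, C_mul_monomial, C_mul_monomial]
    rw [show (1/tt) * (1*tt) = (1:KK) from by rw [one_mul]; exact one_div_mul_cancel tt_ne,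
      show (1/tt) * (1*5) = (5/tt) * ((1:KK)*1) from by ring]
    rw [add_sub_cancel_left]
  rw [h]
  refine sub_mem (Ideal.mul_mem_left _ _ (Ideal.mul_mem_left _ _ g3_mem))
    (Ideal.mul_mem_left _ _ (Ideal.mul_mem_right _ _ y5z_mem))

def F (i a b : ℕ) : Fin 3 →₀ ℕ :=
  Finsupp.single 0 i + Finsupp.single 1 a + Finsupp.single 2 b

lemma F0 (i a b : ℕ) : (F i a b) 0 = i := by simp [F, Finsupp.single_apply]
lemma F1 (i a b : ℕ) : (F i a b) 1 = a := by simp [F, Finsupp.single_apply]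
lemma F2 (i a b : ℕ) : (F i a b) 2 = b := by simp [F, Finsupp.single_apply]

lemma Fext {i a b i' a' b' : ℕ} (h0 : i = i') (h1 : a = a') (h2 : b = b') :
    F i a b = F i' a' b' := by rw [h0, h1, h2]

lemma F_add_apply (i a b : ℕ) (e : Fin 3 →₀ ℕ) (j : Fin 3) :
    (F i a b + e) j = (F i a b) j + e j := by simp

lemma fin3_ext {f g : Fin 3 →₀ ℕ} (h0 : f 0 = g 0) (h1 : f 1 = g 1) (h2 : f 2 = g 2) :
    f = g := by
  ext j
  fin_cases j
  · exact h0
  · exact h1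
  · exact h2

lemma key : ∀ b a i : ℕ, (monomial (F i a b) 1 : SS) - red (F i a b) ∈ I := by
  intro b
  induction b using Nat.strong_induction_on with
  | _ b ih =>
    intro a i
    rcases eq_or_ne i 0 with hi | hi
    · subst hi
      by_cases hb : 4 ≤ b
      · have hEa : F 0 a (b-4) + Finsupp.single 2 4 = F 0 a b := by
          apply fin3_ext <;>
            simp only [Finsupp.add_apply, F0, F1, F2, Finsupp.single_apply] <;>
            simp <;> omega
        have hEb : F 0 a (b-4) + Finsupp.single 1 6 = F 0 (a+6) (b-4) := by
          apply fin3_ext <;>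
            simp only [Finsupp.add_apply, F0, F1, F2, Finsupp.single_apply] <;>
            simp <;> omega
        have hmul : (monomial (F 0 a (b-4)) 1 : SS) * g3
            = monomial (F 0 a b) 5 + monomial (F 0 (a+6) (b-4)) tt := by
          rw [hg3, mul_add, monomial_mul, monomial_mul, one_mul, one_mul, hEa, hEb]
        have hstep : (monomial (F 0 a b) 1 : SS) + cc • monomial (F 0 (a+6) (b-4)) 1 ∈ I := by
          have h : (monomial (F 0 a b) 1 : SS) + cc • monomial (F 0 (a+6) (b-4)) 1
              = C (1/5) * (monomial (F 0 a (b-4)) 1 * g3) := by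
            rw [hmul, mul_add, C_mul_monomial, C_mul_monomial,
              show (1/5 : KK) * 5 = 1 from by norm_num,
              show (1/5 : KK) * tt = cc from by rw [cc]; ring,
              smul_monomial, smul_eq_mul, mul_one]
          rw [h]
          exact Ideal.mul_mem_left _ _ (Ideal.mul_mem_left _ _ g3_mem)
        have hred : red (F 0 a b) = (-cc) • red (F 0 (a+6) (b-4)) := by
          rw [red, red, F0, F1, F2, F0, F1, F2]
          by_cases hd : dead (a+6) (b-4)
          · rw [if_pos (Or.inr (show dead a b from by unfold dead at hd ⊢; omega)),
              if_pos (Or.inr hd), smul_zero]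
          · have h1 : ¬((0:ℕ) ≠ 0 ∨ dead a b) := by
              push_neg
              refine ⟨rfl, fun hdd => hd ?_⟩
              unfold dead at hdd ⊢; omega
            have h2 : ¬((0:ℕ) ≠ 0 ∨ dead (a+6) (b-4)) := by
              push_neg; exact ⟨rfl, hd⟩
            rw [if_neg h1, if_neg h2,
              show b % 4 = (b-4) % 4 from by omega,
              show b / 4 = (b-4)/4 + 1 from by omega,
              show a + 6*((b-4)/4 + 1) = a + 6 + 6*((b-4)/4) from by omega,
              pow_succ', mul_smul]
        have goal_eq : (monomial (F 0 a b) 1 : SS) - red (F 0 a b)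
            = ((monomial (F 0 a b) 1 : SS) + cc • monomial (F 0 (a+6) (b-4)) 1)
              - cc • ((monomial (F 0 (a+6) (b-4)) 1 : SS) - red (F 0 (a+6) (b-4))) := by
          rw [hred, smul_sub, neg_smul]
          abel
        rw [goal_eq]
        exact sub_mem hstep (smulK_mem (ih (b-4) (by omega) (a+6) 0) cc)
      · by_cases hd : dead a b
        · rw [red, F0, F1, F2, if_pos (Or.inr hd), sub_zero]
          rcases Nat.eq_zero_or_pos b with hb0 | hb1
          · subst hb0
            have ha : 11 ≤ a := by unfold dead at hd; omega
            have hE : (Finsupp.single 1 (a-11) : Fin 3 →₀ ℕ) + Finsupp.single 1 11 = F 0 a 0 := by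
              rw [← Finsupp.single_add]
              apply fin3_ext <;>
                simp only [F0, F1, F2, Finsupp.single_apply] <;> simp <;> omega
            have h : (monomial (F 0 a 0) 1 : SS)
                = monomial (Finsupp.single 1 (a-11)) 1 * monomial (Finsupp.single 1 11) 1 := by
              rw [monomial_mul, one_mul, hE]
            rw [h]
            exact Ideal.mul_mem_left _ _ y11_mem
          · have ha : 5 ≤ a := by unfold dead at hd; omega
            have hE : F 0 (a-5) (b-1) + (Finsupp.single 1 5 + Finsupp.single 2 1) = F 0 a b := by
              apply fin3_ext <;>
                simp only [Finsupp.add_apply, F0, F1, F2, Finsupp.single_apply] <;>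
                simp <;> omega
            have h : (monomial (F 0 a b) 1 : SS)
                = monomial (F 0 (a-5) (b-1)) 1
                  * monomial (Finsupp.single 1 5 + Finsupp.single 2 1) 1 := by
              rw [monomial_mul, one_mul, hE]
            rw [h]
            exact Ideal.mul_mem_left _ _ y5z_mem
        · have hE : E a b = F 0 a b := by
            apply fin3_ext <;> simp only [E0, E1, E2, F0, F1, F2]
          have h : red (F 0 a b) = monomial (F 0 a b) 1 := by
            rw [red, F0, F1, F2, if_neg (show ¬((0:ℕ) ≠ 0 ∨ dead a b) from by
              push_neg; exact ⟨rfl, hd⟩)]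
            rw [show b/4 = 0 from by omega, show b%4 = b from by omega,
              pow_zero, one_smul, Nat.mul_zero, Nat.add_zero, hE]
          rw [h, sub_self]
          exact zero_mem I
    · have hred : red (F i a b) = 0 := by
        rw [red, if_pos (Or.inl (by rw [F0]; exact hi))]
      have hE : F (i-1) a b + Finsupp.single 0 1 = F i a b := by
        apply fin3_ext <;>
          simp only [Finsupp.add_apply, F0, F1, F2, Finsupp.single_apply] <;>
          simp <;> omega
      have h : (monomial (F i a b) 1 : SS) = monomial (F (i-1) a b) 1 * g1 := by
        rw [hg1, monomial_mul, one_mul, hE]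
      rw [hred, sub_zero, h]
      exact Ideal.mul_mem_left _ _ g1_mem

lemma key' (d : Fin 3 →₀ ℕ) (k : KK) : (monomial d k : SS) - k • red d ∈ I := by
  have hFd : d = F (d 0) (d 1) (d 2) := by
    apply fin3_ext <;> simp only [F0, F1, F2]
  have h := smulK_mem (key (d 2) (d 1) (d 0)) k
  rw [smul_sub, smul_monomial, smul_eq_mul, mul_one, ← hFd] at h
  exact h

def D : Fin 26 → ℕ × ℕ :=
  ![(0,0),(1,0),(2,0),(3,0),(4,0),(5,0),(6,0),(7,0),(8,0),(9,0),(10,0),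
    (0,1),(1,1),(2,1),(3,1),(4,1),
    (0,2),(1,2),(2,2),(3,2),(4,2),
    (0,3),(1,3),(2,3),(3,3),(4,3)]

lemma D_inj : Function.Injective D := by decide

def Dexp (i : Fin 26) : Fin 3 →₀ ℕ := E (D i).1 (D i).2

lemma E_inj {a r a' r' : ℕ} (h : E a r = E a' r') : a = a' ∧ r = r' := by
  constructor
  · have h1 := DFunLike.congr_fun h (1 : Fin 3)
    rwa [E1, E1] at h1
  · have h2 := DFunLike.congr_fun h (2 : Fin 3)
    rwa [E2, E2] at h2

lemma Dexp_inj : Function.Injective Dexp := by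
  intro i j h
  obtain ⟨h1, h2⟩ := E_inj h
  exact D_inj (Prod.ext h1 h2)

lemma D_not_dead (i : Fin 26) : ¬ dead (D i).1 (D i).2 := by
  revert i; decide

lemma D_snd_le (i : Fin 26) : (D i).2 ≤ 3 := by revert i; decide

lemma hD (a r : ℕ) (hr : r ≤ 3) (hd : ¬ dead a r) : ∃ i, D i = (a, r) := by
  have ha : a ≤ 10 := by unfold dead at hd; omega
  interval_cases a <;> interval_cases r <;>
    first
      | decide
      | (exact absurd (by decide) hd)

lemma red_std (a r : ℕ) (hr : r ≤ 3) (hd : ¬ dead a r) : red (E a r) = monomial (E a r) 1 := by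
  rw [red, E0, E1, E2, if_neg (show ¬((0:ℕ) ≠ 0 ∨ dead a r) from by push_neg; exact ⟨rfl, hd⟩)]
  rw [show r/4 = 0 from by omega, show r%4 = r from by omega,
    pow_zero, one_smul, Nat.mul_zero, Nat.add_zero]

lemma red_Dexp (i : Fin 26) : red (Dexp i) = monomial (Dexp i) 1 :=
  red_std _ _ (D_snd_le i) (D_not_dead i)

lemma main_result : Module.finrank KK (SS ⧸ I) = 26 := by
  classical
  set π := (Ideal.Quotient.mkₐ KK I).toLinearMap with hπdef
  set v : Fin 26 → SS ⧸ I := fun i => π (monomial (Dexp i) 1) with hv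
  have hπ : ∀ p : SS, Ideal.Quotient.mk I p = π p := fun p => rfl
  have hli : LinearIndependent KK (fun i => (monomial (Dexp i) 1 : SS)) := by
    have hb := (basisMonomials (Fin 3) KK).linearIndependent
    have := hb.comp Dexp Dexp_inj
    simpa [coe_basisMonomials, Function.comp_def] using this
  have hindep : LinearIndependent KK v := by
    rw [Fintype.linearIndependent_iff]
    intro g hg j
    have hmem : (∑ i, g i • (monomial (Dexp i) 1 : SS)) ∈ I := by
      rw [← Ideal.Quotient.eq_zero_iff_mem, hπ, map_sum]
      simp only [map_smul]
      exact hg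
    have h0 := L_vanish hmem
    rw [map_sum] at h0
    simp only [map_smul, L_monomial, one_smul, red_Dexp] at h0
    exact (Fintype.linearIndependent_iff.mp hli) g h0 j
  have hspan : ⊤ ≤ Submodule.span KK (Set.range v) := by
    rintro q -
    obtain ⟨p, rfl⟩ := Ideal.Quotient.mk_surjective (I := I) q
    rw [hπ]
    induction p using MvPolynomial.induction_on' with
    | monomial d k =>
      have hπeq : π (monomial d k) = k • π (red d) := by
        have h2 : π (monomial d k - k • red d) = 0 := by
          rw [← hπ, Ideal.Quotient.eq_zero_iff_mem]
          exact key' d k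
        rw [map_sub, map_smul, sub_eq_zero] at h2
        exact h2
      rw [hπeq, red]
      split_ifs with h
      · rw [map_zero, smul_zero]
        exact zero_mem _
      · push_neg at h
        obtain ⟨hi0, hd⟩ := h
        have hd' : ¬ dead (d 1 + 6*(d 2/4)) (d 2 % 4) := by
          unfold dead at hd ⊢; omega
        obtain ⟨i, hi⟩ := hD _ _ (by omega) hd'
        have hE : E (d 1 + 6*(d 2/4)) (d 2 % 4) = Dexp i := by
          rw [Dexp, hi]
        rw [hE, map_smul, smul_smul]
        exact Submodule.smul_mem _ _ (Submodule.subset_span ⟨i, rfl⟩)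
    | add p q hp hq =>
      rw [map_add]
      exact add_mem hp hq
  have B := Module.Basis.mk hindep hspan
  rw [Module.finrank_eq_card_basis B, Fintype.card_fin]

end SM

open MvPolynomial in
/-- Over `K = ℚ(t)`, the second sectional Milnor number of
`F_t = z^5 + ty^6z + xy^7 + x^15` is `26`:
`K[x,y,z]/(x, 6ty^5z + 7xy^6, 5z^4 + ty^6)` has `K`-dimension `26`. -/
theorem sectional_milnor_Ft :
    Module.finrank (RatFunc ℚ) (MvPolynomial (Fin 3) (RatFunc ℚ) ⧸
      Ideal.span {(X 0 : MvPolynomial (Fin 3) (RatFunc ℚ)),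
        6 * C RatFunc.X * X 1 ^ 5 * X 2 + 7 * X 0 * X 1 ^ 6,
        5 * X 2 ^ 4 + C RatFunc.X * X 1 ^ 6}) = 26 :=
  main_result
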